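/- arXiv:math-ph/0211024 — 3 statements merged into one kernel-verified Lean document; each statement's English description precedes it below -/
import Mathlib

section
/- Let 0 < σ ≤ 1 and set v₀(t) = (1+t²)^{−(3−σ)/2}, v₁(t) = (1+t²)^{−(1−σ)/2} for t > 0. Then sup_{0 < τ < ∞} ( ∫₀^τ v₀(t) t² dt )^{1/2} ( ∫_τ^∞ [v₁(t) t²]^{−1} dt )^{1/2} < ∞. -/
open MeasureTheory Set

lemma real_rpow_add_le {x y p : ℝ} (hx : 0 ≤ x) (hy : 0 ≤ y) (hp : 0 ≤ p) (hp1 : p ≤ 1) :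
    (x + y) ^ p ≤ x ^ p + y ^ p := by
  lift x to NNReal using hx
  lift y to NNReal using hy
  exact_mod_cast NNReal.rpow_add_le_add_rpow x y hp hp1

lemma my_integral_le_of_le {s : Set ℝ} (hs : MeasurableSet s) {f g : ℝ → ℝ}
    (hg : IntegrableOn g s) (hf : AEStronglyMeasurable f (volume.restrict s))
    (h0 : ∀ x ∈ s, 0 ≤ f x) (h : ∀ x ∈ s, f x ≤ g x) :
    ∫ x in s, f x ≤ ∫ x in s, g x := by
  have hfi : IntegrableOn f s := by
    refine Integrable.mono' hg hf ?_
    filter_upwards [ae_restrict_mem hs] with x hx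
    rw [Real.norm_eq_abs, abs_of_nonneg (h0 x hx)]
    exact h x hx
  exact setIntegral_mono_on hfi hg hs h

lemma my_sqrt_le {x c : ℝ} (hx : 0 ≤ x) (hc : 0 ≤ c) (h : x ≤ c ^ 2) :
    x ^ ((1:ℝ)/2) ≤ c := by
  calc x ^ ((1:ℝ)/2) ≤ (c ^ 2) ^ ((1:ℝ)/2) :=
        Real.rpow_le_rpow hx h (by norm_num)
    _ = c := by
        rw [← Real.rpow_natCast c 2, ← Real.rpow_mul hc]; norm_num

lemma my_prod_le {I0 I1 A B c : ℝ} (h0 : 0 ≤ I0) (h1 : 0 ≤ I1) (hA : I0 ≤ A)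
    (hB : I1 ≤ B) (hc : 0 ≤ c) (hAB : A * B ≤ c ^ 2) :
    I0 ^ ((1:ℝ)/2) * I1 ^ ((1:ℝ)/2) ≤ c := by
  have hA0 : 0 ≤ A := h0.trans hA
  have hB0 : 0 ≤ B := h1.trans hB
  calc I0 ^ ((1:ℝ)/2) * I1 ^ ((1:ℝ)/2)
      ≤ A ^ ((1:ℝ)/2) * B ^ ((1:ℝ)/2) :=
        mul_le_mul (Real.rpow_le_rpow h0 hA (by norm_num))
          (Real.rpow_le_rpow h1 hB (by norm_num))
          (Real.rpow_nonneg h1 _) (Real.rpow_nonneg hA0 _)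
    _ = (A * B) ^ ((1:ℝ)/2) := (Real.mul_rpow hA0 hB0).symm
    _ ≤ c := my_sqrt_le (by positivity) hc hAB

-- pointwise bound for the second integrand
lemma f1_le {σ : ℝ} (hσ : 0 < σ) (hσ1 : σ ≤ 1) {t : ℝ} (ht : 0 < t) :
    ((1 + t ^ 2) ^ (-(1 - σ) / 2) * t ^ 2)⁻¹ ≤ t ^ (-2:ℝ) + t ^ (-1 - σ) := by
  have hb : (0:ℝ) < 1 + t ^ 2 := by positivity
  have h1 : ((1 + t ^ 2) ^ (-(1 - σ) / 2) * t ^ 2)⁻¹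
      = (1 + t ^ 2) ^ ((1 - σ) / 2) * (t ^ 2)⁻¹ := by
    rw [mul_inv, show -(1 - σ) / 2 = -((1 - σ) / 2) by ring,
      Real.rpow_neg hb.le, inv_inv]
  have h2 : (1 + t ^ 2) ^ ((1 - σ) / 2) ≤ 1 + t ^ (1 - σ) := by
    have := real_rpow_add_le (x := 1) (y := t ^ 2) (p := (1 - σ) / 2)
      zero_le_one (by positivity) (by linarith) (by linarith)
    rw [Real.one_rpow] at this
    have ht2 : (t ^ 2 : ℝ) ^ ((1 - σ) / 2) = t ^ (1 - σ) := by
      rw [← Real.rpow_natCast t 2, ← Real.rpow_mul ht.le,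
        show ((2:ℕ):ℝ) * ((1 - σ) / 2) = 1 - σ by push_cast; ring]
    rwa [ht2] at this
  rw [h1]
  have hinv : ((t:ℝ) ^ 2)⁻¹ = t ^ (-2:ℝ) := by
    rw [← Real.rpow_natCast t 2, ← Real.rpow_neg ht.le]
    norm_num
  calc (1 + t ^ 2) ^ ((1 - σ) / 2) * (t ^ 2)⁻¹
      ≤ (1 + t ^ (1 - σ)) * (t ^ 2)⁻¹ :=
        mul_le_mul_of_nonneg_right h2 (by positivity)
    _ = t ^ (-2:ℝ) + t ^ (1 - σ) * t ^ (-2:ℝ) := by rw [hinv]; ring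
    _ = t ^ (-2:ℝ) + t ^ (-1 - σ) := by
        rw [← Real.rpow_add ht]; ring_nf

lemma f0_cont {σ : ℝ} : Continuous fun t : ℝ => (1 + t ^ 2) ^ (-(3 - σ) / 2) * t ^ 2 := by
  refine Continuous.mul ?_ (continuous_pow 2)
  refine (continuous_const.add (continuous_pow 2)).rpow_const fun t => Or.inl (by positivity : (1:ℝ) + t ^ 2 ≠ 0)

/-- Verification of the Gurka–Opic condition for the weights
`v₀(t) = (1+t²)^{-(3-σ)/2}`, `v₁(t) = (1+t²)^{-(1-σ)/2}` with `p = 2`. -/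
theorem gurkaOpic_condition (σ : ℝ) (hσ : 0 < σ) (hσ1 : σ ≤ 1) :
    ∃ C : ℝ, ∀ τ : ℝ, 0 < τ →
      (∫ t in Set.Ioc (0 : ℝ) τ, (1 + t ^ 2) ^ (-(3 - σ) / 2) * t ^ 2) ^ ((1 : ℝ) / 2) *
      (∫ t in Set.Ioi τ, ((1 + t ^ 2) ^ (-(1 - σ) / 2) * t ^ 2)⁻¹) ^ ((1 : ℝ) / 2)
        ≤ C := by
  refine ⟨2 / σ, fun τ hτ => ?_⟩
  set I0 := ∫ t in Set.Ioc (0 : ℝ) τ, (1 + t ^ 2) ^ (-(3 - σ) / 2) * t ^ 2 with hI0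
  set I1 := ∫ t in Set.Ioi τ, ((1 + t ^ 2) ^ (-(1 - σ) / 2) * t ^ 2)⁻¹ with hI1
  have hI0nn : 0 ≤ I0 := setIntegral_nonneg measurableSet_Ioc fun x _ => by positivity
  have hI1nn : 0 ≤ I1 := setIntegral_nonneg measurableSet_Ioi fun x _ => by positivity
  have hmeas1 : AEStronglyMeasurable
      (fun t : ℝ => ((1 + t ^ 2) ^ (-(1 - σ) / 2) * t ^ 2)⁻¹) (volume.restrict (Set.Ioi τ)) := by
    refine ContinuousOn.aestronglyMeasurable ?_ measurableSet_Ioi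
    refine ContinuousOn.inv₀ (Continuous.continuousOn ?_) fun t ht => ?_
    · exact ((continuous_const.add (continuous_pow 2)).rpow_const
        fun t => Or.inl (by positivity : (1:ℝ) + t ^ 2 ≠ 0)).mul (continuous_pow 2)
    · have : 0 < t := hτ.trans ht
      positivity
  have hint2 : IntegrableOn (fun t : ℝ => t ^ (-2:ℝ)) (Set.Ioi τ) :=
    integrableOn_Ioi_rpow_of_lt (by norm_num) hτ
  have hint1σ : IntegrableOn (fun t : ℝ => t ^ (-1 - σ)) (Set.Ioi τ) :=
    integrableOn_Ioi_rpow_of_lt (by linarith) hτ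
  have hval2 : ∫ t in Set.Ioi τ, t ^ (-2:ℝ) = τ⁻¹ := by
    rw [integral_Ioi_rpow_of_lt (by norm_num) hτ,
      show (-2 + 1 : ℝ) = -1 by norm_num, Real.rpow_neg_one]
    ring
  have hval1σ : ∫ t in Set.Ioi τ, t ^ (-1 - σ) = τ ^ (-σ) / σ := by
    rw [integral_Ioi_rpow_of_lt (by linarith) hτ,
      show (-1 - σ + 1 : ℝ) = -σ by ring]
    field_simp
  rcases le_total τ 1 with h1 | h1
  · -- small τ : I0 ≤ τ, I1 ≤ 2 / (σ * τ)
    have hA : I0 ≤ τ := by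
      have hle : I0 ≤ ∫ t in Set.Ioc (0:ℝ) τ, t ^ 2 := by
        refine my_integral_le_of_le measurableSet_Ioc
          ((continuous_pow 2).integrableOn_Ioc) f0_cont.aestronglyMeasurable
          (fun x _ => by positivity) fun x hx => ?_
        have hb : (1:ℝ) ≤ 1 + x ^ 2 := by nlinarith [sq_nonneg x]
        have h2 := Real.rpow_le_one_of_one_le_of_nonpos hb
          (show -(3 - σ) / 2 ≤ 0 by linarith)
        nlinarith [sq_nonneg x]
      have hval : ∫ t in Set.Ioc (0:ℝ) τ, t ^ 2 = τ ^ 3 / 3 := by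
        rw [← intervalIntegral.integral_of_le hτ.le, integral_pow]
        norm_num
      rw [hval] at hle
      nlinarith [mul_nonneg (mul_nonneg hτ.le (sub_nonneg.2 h1))
        (show (0:ℝ) ≤ 1 + τ by linarith)]
    have hB : I1 ≤ 2 / (σ * τ) := by
      have hle : I1 ≤ ∫ t in Set.Ioi τ, (t ^ (-2:ℝ) + t ^ (-1 - σ)) :=
        my_integral_le_of_le measurableSet_Ioi (hint2.add hint1σ) hmeas1
          (fun x _ => by positivity) fun x hx => f1_le hσ hσ1 (hτ.trans hx)
      rw [integral_add hint2 hint1σ, hval2, hval1σ] at hle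
      have hτσ : τ ^ (-σ) ≤ τ⁻¹ := by
        have := Real.rpow_le_rpow_of_exponent_ge hτ h1 (show (-1:ℝ) ≤ -σ by linarith)
        rwa [Real.rpow_neg_one] at this
      have hτi : (0:ℝ) < τ⁻¹ := by positivity
      have e1 : τ⁻¹ ≤ τ⁻¹ / σ := by
        rw [le_div_iff₀ hσ]
        nlinarith
      have e2 : τ ^ (-σ) / σ ≤ τ⁻¹ / σ := by gcongr
      have e3 : τ⁻¹ / σ + τ⁻¹ / σ = 2 / (σ * τ) := by
        field_simp
        ring
      linarith
    refine my_prod_le hI0nn hI1nn hA hB (by positivity) ?_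
    rw [show τ * (2 / (σ * τ)) = 2 / σ by field_simp]
    have h2σ : (1:ℝ) ≤ 2 / σ := by
      rw [le_div_iff₀ hσ]; linarith
    nlinarith
  · -- large τ : I0 ≤ τ^σ/σ, I1 ≤ 2 τ^(-σ)/σ
    have hA : I0 ≤ τ ^ σ / σ := by
      have hle : I0 ≤ ∫ t in Set.Ioc (0:ℝ) τ, t ^ (σ - 1) := by
        refine my_integral_le_of_le measurableSet_Ioc
          ((intervalIntegral.intervalIntegrable_rpow' (a := 0) (b := τ) (r := σ - 1)
            (by linarith)).1) f0_cont.aestronglyMeasurable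
          (fun x _ => by positivity) fun x hx => ?_
        have hx0 : 0 < x := hx.1
        have hstep : (1 + x ^ 2) ^ (-(3 - σ) / 2) ≤ (x ^ 2) ^ (-(3 - σ) / 2) :=
          Real.rpow_le_rpow_of_nonpos (by positivity) (by nlinarith) (by linarith)
        calc (1 + x ^ 2) ^ (-(3 - σ) / 2) * x ^ 2
            ≤ (x ^ 2) ^ (-(3 - σ) / 2) * x ^ 2 :=
              mul_le_mul_of_nonneg_right hstep (by positivity)
          _ = x ^ (σ - 1) := by
              rw [← Real.rpow_natCast x 2, ← Real.rpow_mul hx0.le, ← Real.rpow_add hx0]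
              congr 1
              push_cast
              ring
      have hval : ∫ t in Set.Ioc (0:ℝ) τ, t ^ (σ - 1) = τ ^ σ / σ := by
        rw [← intervalIntegral.integral_of_le hτ.le,
          integral_rpow (Or.inl (by linarith)),
          show σ - 1 + 1 = σ by ring, Real.zero_rpow hσ.ne']
        ring
      rwa [hval] at hle
    have hB : I1 ≤ 2 * τ ^ (-σ) / σ := by
      have hle : I1 ≤ ∫ t in Set.Ioi τ, 2 * t ^ (-1 - σ) := by
        refine my_integral_le_of_le measurableSet_Ioi (hint1σ.const_mul 2) hmeas1
          (fun x _ => by positivity) fun x hx => ?_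
        have hx1 : (1:ℝ) ≤ x := h1.trans (le_of_lt hx)
        have hx0 : 0 < x := lt_of_lt_of_le one_pos hx1
        have h2 : x ^ (-2:ℝ) ≤ x ^ (-1 - σ) :=
          Real.rpow_le_rpow_of_exponent_le hx1 (by linarith)
        calc ((1 + x ^ 2) ^ (-(1 - σ) / 2) * x ^ 2)⁻¹
            ≤ x ^ (-2:ℝ) + x ^ (-1 - σ) := f1_le hσ hσ1 hx0
          _ ≤ 2 * x ^ (-1 - σ) := by linarith
      rw [integral_const_mul, hval1σ] at hle
      calc I1 ≤ 2 * (τ ^ (-σ) / σ) := hle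
        _ = 2 * τ ^ (-σ) / σ := by ring
    refine my_prod_le hI0nn hI1nn hA hB (by positivity) ?_
    have hmul : τ ^ σ * τ ^ (-σ) = 1 := by
      rw [← Real.rpow_add hτ]
      simp
    rw [show τ ^ σ / σ * (2 * τ ^ (-σ) / σ) = (τ ^ σ * τ ^ (-σ)) * 2 / σ ^ 2 by ring,
      hmul, one_mul, div_pow]
    rw [div_le_div_iff₀ (by positivity) (by positivity)]
    nlinarith [sq_nonneg σ]
end

section
/- Let 0 < σ ≤ 1 and w(x) = (1+|x|²)^{1/2}. There exists a constant C > 0 such that for every u ∈ C¹_c(ℝ³), (∫_{ℝ³} w^{−(3−σ)} |u|² dx)^{1/2} ≤ C (∫_{ℝ³} w^{−(1−σ)} |∇u|² dx)^{1/2}. -/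
open MeasureTheory

noncomputable section WPsection
namespace WPaux

abbrev E3 := EuclideanSpace ℝ (Fin 3)

def eb (k : Fin 3) : E3 := EuclideanSpace.single k 1

def S (x : E3) : ℝ := ∑ k, x k * x k
def Q (x : E3) : ℝ := 1 + S x

lemma S_nonneg (x : E3) : 0 ≤ S x := Finset.sum_nonneg fun _ _ => mul_self_nonneg _
lemma Q_pos (x : E3) : 0 < Q x := by have := S_nonneg x; unfold Q; linarith
lemma Q_ne (x : E3) : Q x ≠ 0 := (Q_pos x).ne'
lemma S_le_Q (x : E3) : S x ≤ Q x := by unfold Q; linarith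

lemma norm_sq_eq (x : E3) : ‖x‖ ^ 2 = S x := by
  have h : ‖x‖ = Real.sqrt (S x) := by
    rw [EuclideanSpace.norm_eq]; congr 1
    simp [S, sq_abs, sq]
  rw [h, Real.sq_sqrt (S_nonneg x)]

lemma contDiff_S : ContDiff ℝ 1 S :=
  ContDiff.sum fun k _ =>
    ((EuclideanSpace.proj (𝕜 := ℝ) k).contDiff).mul ((EuclideanSpace.proj (𝕜 := ℝ) k).contDiff)

lemma contDiff_Q : ContDiff ℝ 1 Q := contDiff_const.add contDiff_S

def QD (x : E3) : E3 →L[ℝ] ℝ :=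
  ∑ k, ((2 : ℝ) * x k) • (EuclideanSpace.proj (𝕜 := ℝ) k)

lemma hasFDerivAt_coord (x : E3) (k : Fin 3) :
    HasFDerivAt (fun y : E3 => y k) (EuclideanSpace.proj (𝕜 := ℝ) k) x :=
  (EuclideanSpace.proj (𝕜 := ℝ) k).hasFDerivAt

lemma hasFDerivAt_Q (x : E3) : HasFDerivAt Q (QD x) x := by
  have h : ∀ k : Fin 3, HasFDerivAt (fun y : E3 => y k * y k)
      (((2:ℝ) * x k) • (EuclideanSpace.proj (𝕜 := ℝ) k)) x := by
    intro k
    have := (hasFDerivAt_coord x k).mul (hasFDerivAt_coord x k)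
    have h2 : x k • EuclideanSpace.proj (𝕜 := ℝ) k + x k • EuclideanSpace.proj (𝕜 := ℝ) k
        = ((2:ℝ) * x k) • (EuclideanSpace.proj (𝕜 := ℝ) k) := by
      rw [two_mul, add_smul]
    rwa [h2] at this
  have hsum : HasFDerivAt S (QD x) x :=
    HasFDerivAt.sum (fun k (_ : k ∈ Finset.univ) => h k)
  exact hsum.const_add 1

lemma QD_apply (x : E3) (k : Fin 3) : QD x (eb k) = 2 * x k := by
  simp [QD, eb, EuclideanSpace.single_apply, Finset.sum_ite_eq]

lemma hasFDerivAt_Qc (c : ℝ) (x : E3) :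
    HasFDerivAt (fun y => Q y ^ c) ((c * Q x ^ (c - 1)) • QD x) x :=
  (Real.hasDerivAt_rpow_const (Or.inl (Q_ne x))).comp_hasFDerivAt x (hasFDerivAt_Q x)

lemma contDiff_Qc (c : ℝ) : ContDiff ℝ 1 (fun x => Q x ^ c) :=
  contDiff_Q.rpow_const_of_ne Q_ne

lemma continuous_Qc (c : ℝ) : Continuous (fun x => Q x ^ c) := (contDiff_Qc c).continuous



lemma integral_fderiv_eq_zero (g : EuclideanSpace ℝ (Fin 3) → ℝ)
    (hg : ContDiff ℝ 1 g) (hsg : HasCompactSupport g) (v : EuclideanSpace ℝ (Fin 3)) :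
    ∫ x, fderiv ℝ g x v = 0 := by
  obtain ⟨D, hD⟩ := hg.lipschitzWith_of_hasCompactSupport hsg one_ne_zero
  have h1 := LipschitzWith.integral_lineDeriv_mul_eq (μ := volume)
    (LipschitzWith.const' (K := 0) (1 : ℝ)) hD hsg v
  have h2 : ∀ x : EuclideanSpace ℝ (Fin 3),
      lineDeriv ℝ (fun _ : EuclideanSpace ℝ (Fin 3) => (1:ℝ)) x v = 0 := by
    intro x; rw [(differentiableAt_const (1:ℝ)).lineDeriv_eq_fderiv]; simp
  simp only [h2, zero_mul, integral_zero, mul_one] at h1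
  have h3 : ∀ x : EuclideanSpace ℝ (Fin 3),
      lineDeriv ℝ g x (-v) = -(fderiv ℝ g x v) := by
    intro x
    rw [(hg.differentiable one_ne_zero x).lineDeriv_eq_fderiv, map_neg]
  simp only [h3, integral_neg] at h1
  linarith


lemma proj_eb (k : Fin 3) : eb k k = 1 := by simp [eb, EuclideanSpace.single_apply]

lemma fderiv_phi (c : ℝ) (k : Fin 3) (x : E3) {u : E3 → ℝ} (hu : ContDiff ℝ 1 u) :
    fderiv ℝ (fun y => Q y ^ c * (y k * (u y * u y))) x (eb k)
      = 2*c*Q x^(c-1) * (x k*x k) * (u x*u x) + Q x^c * (u x*u x)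
        + 2 * Q x ^ c * x k * u x * fderiv ℝ u x (eb k) := by
  have hux : HasFDerivAt u (fderiv ℝ u x) x := (hu.differentiable one_ne_zero x).hasFDerivAt
  have h := (hasFDerivAt_Qc c x).mul ((hasFDerivAt_coord x k).mul (hux.mul hux))
  rw [show (fun y => Q y ^ c * (y k * (u y * u y))) = ((fun y => Q y ^ c) * ((fun y => y k) * (u * u))) from rfl, h.fderiv]
  simp [QD_apply, ContinuousLinearMap.add_apply, ContinuousLinearMap.smul_apply,
    PiLp.proj_apply, proj_eb]
  ring

section Key

variable {u : E3 → ℝ}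

lemma key (σ : ℝ) (hσ : 0 < σ) (hσ1 : σ ≤ 1)
    (hu : ContDiff ℝ 1 u) (hsu : HasCompactSupport u) :
    Real.sqrt (∫ x, Q x ^ ((σ - 3)/2) * u x ^ 2)
      ≤ (2/σ) * Real.sqrt (∫ x, Q x ^ ((σ - 1)/2) * ∑ k, (fderiv ℝ u x (eb k)) ^ 2) := by
  set c : ℝ := (σ - 3)/2 with hc
  -- basic continuity/support facts
  have hcu : Continuous u := hu.continuous
  have hfc : Continuous (fderiv ℝ u) := hu.continuous_fderiv one_ne_zero
  have hfk : ∀ k, Continuous fun x => fderiv ℝ u x (eb k) :=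
    fun k => hfc.clm_apply continuous_const
  have hcoord : ∀ k : Fin 3, Continuous fun x : E3 => x k :=
    fun k => (EuclideanSpace.proj (𝕜 := ℝ) k).continuous
  have hsfd : HasCompactSupport (fderiv ℝ u) := hsu.fderiv (𝕜 := ℝ)
  have hsfk : ∀ k, HasCompactSupport fun x => fderiv ℝ u x (eb k) := by
    intro k
    exact hsfd.comp_left (g := fun L : E3 →L[ℝ] ℝ => L (eb k)) rfl
  -- notation
  set T : E3 → ℝ := fun x => ∑ k, (fderiv ℝ u x (eb k)) ^ 2 with hT
  set P : E3 → ℝ := fun x => ∑ k, x k * fderiv ℝ u x (eb k) with hP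
  set W : E3 → ℝ := fun x => (2*c*Q x^(c-1) * S x + 3 * Q x^c) * (u x * u x) with hW
  set R : E3 → ℝ := fun x => (2 * Q x ^ c * P x) * u x with hR
  have hT_nonneg : ∀ x, 0 ≤ T x := fun x => Finset.sum_nonneg fun _ _ => sq_nonneg _
  have hT_cont : Continuous T := continuous_finset_sum _ fun k _ => (hfk k).pow 2
  have hP_cont : Continuous P :=
    continuous_finset_sum _ fun k _ => (hcoord k).mul (hfk k)
  have hW_cont : Continuous W := by
    apply Continuous.mul
    · exact ((continuous_const.mul (continuous_Qc (c-1))).mul contDiff_S.continuous).add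
        (continuous_const.mul (continuous_Qc c))
    · exact hcu.mul hcu
  have hR_cont : Continuous R :=
    ((continuous_const.mul (continuous_Qc c)).mul hP_cont).mul hcu
  have hsu2 : HasCompactSupport fun x => u x * u x := hsu.mul_left
  have hW_supp : HasCompactSupport W := hsu2.mul_left
  have hR_supp : HasCompactSupport R := hsu.mul_left
  have hW_int : Integrable W := hW_cont.integrable_of_hasCompactSupport hW_supp
  have hR_int : Integrable R := hR_cont.integrable_of_hasCompactSupport hR_supp
  -- the divergence identity : ∫ W = - ∫ R
  have hdiv : ∫ x, W x = - ∫ x, R x := by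
    have hphi_cd : ∀ k : Fin 3, ContDiff ℝ 1 (fun y : E3 => Q y ^ c * (y k * (u y * u y))) :=
      fun k => (contDiff_Qc c).mul (((EuclideanSpace.proj (𝕜 := ℝ) k).contDiff).mul (hu.mul hu))
    have hphi_cs : ∀ k : Fin 3, HasCompactSupport (fun y : E3 => Q y ^ c * (y k * (u y * u y))) :=
      fun k => HasCompactSupport.mul_left (HasCompactSupport.mul_left hsu2)
    have hzero : ∀ k : Fin 3,
        ∫ x, fderiv ℝ (fun y : E3 => Q y ^ c * (y k * (u y * u y))) x (eb k) = 0 :=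
      fun k => integral_fderiv_eq_zero _ (hphi_cd k) (hphi_cs k) _
    have hint_k : ∀ k : Fin 3,
        Integrable (fun x => fderiv ℝ (fun y : E3 => Q y ^ c * (y k * (u y * u y))) x (eb k)) := by
      intro k
      apply Continuous.integrable_of_hasCompactSupport
      · exact (((hphi_cd k).continuous_fderiv one_ne_zero).clm_apply continuous_const)
      · exact ((hphi_cs k).fderiv (𝕜 := ℝ)).comp_left (g := fun L : E3 →L[ℝ] ℝ => L (eb k)) rfl
    have hWR : ∀ x, (∑ k : Fin 3,
        fderiv ℝ (fun y : E3 => Q y ^ c * (y k * (u y * u y))) x (eb k)) = W x + R x := by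
      intro x
      have := fun k : Fin 3 => fderiv_phi c k x hu
      rw [Fin.sum_univ_three, this 0, this 1, this 2]
      simp only [hW, hR, hP, S, Fin.sum_univ_three]
      ring
    have hsum0 : ∫ x, (∑ k : Fin 3,
        fderiv ℝ (fun y : E3 => Q y ^ c * (y k * (u y * u y))) x (eb k)) = 0 := by
      rw [integral_finset_sum _ (fun k _ => hint_k k)]
      simp [hzero]
    rw [show (fun x => ∑ k : Fin 3,
        fderiv ℝ (fun y : E3 => Q y ^ c * (y k * (u y * u y))) x (eb k)) = fun x => W x + R x
      from funext hWR] at hsum0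
    rw [integral_add hW_int hR_int] at hsum0
    linarith

  -- exponent rewrite in the goal
  have he : (σ - 1)/2 = c + 1 := by rw [hc]; ring
  rw [he]
  set F : E3 → ℝ := fun x => Q x ^ (c/2) * |u x| with hF
  set G2 : E3 → ℝ := fun x => Q x ^ ((c+1)/2) * Real.sqrt (T x) with hG2
  have hF_cont : Continuous F := (continuous_Qc _).mul hcu.abs
  have hG_cont : Continuous G2 := (continuous_Qc _).mul hT_cont.sqrt
  have hF_supp : HasCompactSupport F := (hsu.abs).mul_left
  have hT_supp : HasCompactSupport T :=
    hsfd.comp_left (g := fun L : E3 →L[ℝ] ℝ => ∑ k, (L (eb k)) ^ 2) (by simp)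
  have hG_supp : HasCompactSupport G2 :=
    (hT_supp.comp_left (g := Real.sqrt) Real.sqrt_zero).mul_left
  set A := ∫ x, Q x ^ c * u x ^ 2 with hA
  set B := ∫ x, Q x ^ (c+1) * T x with hB
  have hA_int : Integrable (fun x => Q x ^ c * u x ^ 2) := by
    apply Continuous.integrable_of_hasCompactSupport
    · exact (continuous_Qc c).mul (hcu.pow 2)
    · exact HasCompactSupport.mul_left (hsu.comp_left (g := fun t : ℝ => t ^ 2) (by simp))
  have hA_nonneg : 0 ≤ A := integral_nonneg fun x =>
    mul_nonneg (Real.rpow_pos_of_pos (Q_pos x) _).le (sq_nonneg _)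
  have hB_nonneg : 0 ≤ B := integral_nonneg fun x =>
    mul_nonneg (Real.rpow_pos_of_pos (Q_pos x) _).le (hT_nonneg x)
  -- Step D : σ * A ≤ ∫ W
  have h2c : 2 * c = σ - 3 := by rw [hc]; ring
  have hptD : ∀ x, σ * (Q x ^ c * u x ^ 2) ≤ W x := by
    intro x
    have h1 : Q x ^ (c-1) * Q x = Q x ^ c := by
      rw [← Real.rpow_add_one (Q_ne x) (c-1)]; norm_num
    have h2 : (0:ℝ) ≤ Q x ^ (c-1) := (Real.rpow_pos_of_pos (Q_pos x) _).le
    have h3 : 0 ≤ u x * u x := mul_self_nonneg _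
    have h4 := S_nonneg x
    have h5 : Q x = 1 + S x := rfl
    have h6 : u x ^ 2 = u x * u x := sq (u x)
    have h7 : Q x ^ c = Q x ^ (c-1) + Q x ^ (c-1) * S x := by rw [← h1, h5]; ring
    have h8 : W x - σ * (Q x ^ c * u x ^ 2) = (3 - σ) * (Q x ^ (c-1) * (u x * u x)) := by
      simp only [hW]
      rw [h6, h7, h2c]
      ring
    have h9 : (0:ℝ) ≤ (3 - σ) * (Q x ^ (c-1) * (u x * u x)) :=
      mul_nonneg (by linarith) (mul_nonneg h2 h3)
    linarith
  have hD : σ * A ≤ ∫ x, W x := by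
    rw [hA, ← integral_const_mul]
    exact integral_mono (hA_int.const_mul σ) hW_int hptD
  -- Step E pointwise : -R x ≤ 2 * (F x * G2 x)
  have hptE : ∀ x, -R x ≤ 2 * (F x * G2 x) := by
    intro x
    have hQcpos : (0:ℝ) < Q x ^ c := Real.rpow_pos_of_pos (Q_pos x) _
    have habs : |P x| ≤ Real.sqrt (S x) * Real.sqrt (T x) := by
      have h1 : P x ^ 2 ≤ S x * T x := by
        have h0 := Finset.sum_mul_sq_le_sq_mul_sq Finset.univ
          (fun k => x k) (fun k => fderiv ℝ u x (eb k))
        simpa [hP, hT, S, sq] using h0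
      calc |P x| = Real.sqrt (P x ^ 2) := (Real.sqrt_sq_eq_abs (P x)).symm
      _ ≤ Real.sqrt (S x * T x) := Real.sqrt_le_sqrt h1
      _ = Real.sqrt (S x) * Real.sqrt (T x) := Real.sqrt_mul (S_nonneg x) _
    have key2 : Q x ^ c * Real.sqrt (Q x) = Q x ^ (c/2) * Q x ^ ((c+1)/2) := by
      rw [Real.sqrt_eq_rpow, ← Real.rpow_add (Q_pos x), ← Real.rpow_add (Q_pos x)]
      congr 1; ring
    calc -R x ≤ |R x| := neg_le_abs _
    _ = 2 * Q x ^ c * |u x| * |P x| := by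
        rw [hR]
        rw [abs_mul, abs_mul, abs_mul, abs_two, abs_of_pos hQcpos]
        ring
    _ ≤ 2 * Q x ^ c * |u x| * (Real.sqrt (S x) * Real.sqrt (T x)) := by
        have : (0:ℝ) ≤ 2 * Q x ^ c * |u x| := by positivity
        exact mul_le_mul_of_nonneg_left habs this
    _ ≤ 2 * Q x ^ c * |u x| * (Real.sqrt (Q x) * Real.sqrt (T x)) := by
        have hsS : Real.sqrt (S x) ≤ Real.sqrt (Q x) := Real.sqrt_le_sqrt (S_le_Q x)
        have h2 : (0:ℝ) ≤ 2 * Q x ^ c * |u x| := by positivity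
        have h3 : (0:ℝ) ≤ Real.sqrt (T x) := Real.sqrt_nonneg _
        exact mul_le_mul_of_nonneg_left (mul_le_mul_of_nonneg_right hsS h3) h2
    _ = 2 * (F x * G2 x) := by
        simp only [hF, hG2]
        linear_combination (2 * |u x| * Real.sqrt (T x)) * key2
  have hFG_int : Integrable (fun x => 2 * (F x * G2 x)) := by
    apply Continuous.integrable_of_hasCompactSupport
    · exact continuous_const.mul (hF_cont.mul hG_cont)
    · exact HasCompactSupport.mul_left (hF_supp.mul_right)
  have hE1 : ∫ x, W x ≤ ∫ x, 2 * (F x * G2 x) := by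
    rw [hdiv, ← integral_neg]
    exact integral_mono hR_int.neg hFG_int hptE
  -- Hölder / Cauchy–Schwarz
  have hCS : ∫ x, F x * G2 x ≤ Real.sqrt A * Real.sqrt B := by
    have hpq : Real.HolderConjugate 2 2 := Real.HolderConjugate.two_two
    have hFm : MemLp F (ENNReal.ofReal 2) volume :=
      hF_cont.memLp_of_hasCompactSupport hF_supp
    have hGm : MemLp G2 (ENNReal.ofReal 2) volume :=
      hG_cont.memLp_of_hasCompactSupport hG_supp
    have h := integral_mul_le_Lp_mul_Lq_of_nonneg (f := F) (g := G2) hpq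
      (Filter.Eventually.of_forall fun x =>
        mul_nonneg (Real.rpow_pos_of_pos (Q_pos x) _).le (abs_nonneg _))
      (Filter.Eventually.of_forall fun x =>
        mul_nonneg (Real.rpow_pos_of_pos (Q_pos x) _).le (Real.sqrt_nonneg _)) hFm hGm
    have hF2 : ∀ x, F x ^ (2:ℝ) = Q x ^ c * u x ^ 2 := by
      intro x
      rw [show ((2:ℝ)) = ((2:ℕ):ℝ) by norm_num, Real.rpow_natCast]
      simp only [hF]
      rw [mul_pow, sq_abs]
      congr 1
      rw [← Real.rpow_natCast (Q x ^ (c/2)) 2, ← Real.rpow_mul (Q_pos x).le]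
      congr 1; push_cast; ring
    have hG22 : ∀ x, G2 x ^ (2:ℝ) = Q x ^ (c+1) * T x := by
      intro x
      rw [show ((2:ℝ)) = ((2:ℕ):ℝ) by norm_num, Real.rpow_natCast]
      simp only [hG2]
      rw [mul_pow, Real.sq_sqrt (hT_nonneg x)]
      congr 1
      rw [← Real.rpow_natCast (Q x ^ ((c+1)/2)) 2, ← Real.rpow_mul (Q_pos x).le]
      congr 1; push_cast; ring
    simp only [hF2, hG22] at h
    rw [← Real.sqrt_eq_rpow, ← Real.sqrt_eq_rpow] at h
    rw [hA, hB]
    exact h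
  -- final combination
  have hfinal : σ * A ≤ 2 * (Real.sqrt A * Real.sqrt B) := by
    calc σ * A ≤ ∫ x, W x := hD
    _ ≤ ∫ x, 2 * (F x * G2 x) := hE1
    _ = 2 * ∫ x, F x * G2 x := integral_const_mul 2 _
    _ ≤ 2 * (Real.sqrt A * Real.sqrt B) := by
        have := hCS; nlinarith [Real.sqrt_nonneg A, Real.sqrt_nonneg B]
  rcases eq_or_lt_of_le (Real.sqrt_nonneg A) with h0 | h0
  · rw [← h0]
    positivity
  · have hA' : A = Real.sqrt A * Real.sqrt A := (Real.mul_self_sqrt hA_nonneg).symm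
    have hh : σ * (Real.sqrt A * Real.sqrt A) ≤ 2 * (Real.sqrt A * Real.sqrt B) := by
      rw [← hA']; exact hfinal
    rw [div_mul_eq_mul_div, le_div_iff₀ hσ]
    nlinarith [h0, Real.sqrt_nonneg B]

end Key

end WPaux

end WPsection

/-- The weighted Hardy–Poincaré inequality (5.3):
`(∫ w^{-(3-σ)} u²)^{1/2} ≤ C (∫ w^{-(1-σ)} |∇u|²)^{1/2}` for `u ∈ C¹_c(ℝ³)`. -/
theorem weighted_poincare (σ : ℝ) (hσ : 0 < σ) (hσ1 : σ ≤ 1) :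
    ∃ C > 0, ∀ u : EuclideanSpace ℝ (Fin 3) → ℝ,
      ContDiff ℝ 1 u → HasCompactSupport u →
      (∫ x : EuclideanSpace ℝ (Fin 3),
          Real.sqrt (1 + ‖x‖ ^ 2) ^ (-(3 - σ)) * (u x) ^ 2) ^ ((1 : ℝ) / 2)
        ≤ C * (∫ x : EuclideanSpace ℝ (Fin 3),
            Real.sqrt (1 + ‖x‖ ^ 2) ^ (-(1 - σ)) *
              ∑ k : Fin 3, (fderiv ℝ u x (EuclideanSpace.single k 1)) ^ 2) ^ ((1 : ℝ) / 2) := by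
  refine ⟨2/σ, by positivity, fun u hu hsu => ?_⟩
  have hL : ∀ x : WPaux.E3, Real.sqrt (1 + ‖x‖ ^ 2) ^ (-(3 - σ)) = WPaux.Q x ^ ((σ - 3)/2) := by
    intro x
    have h1 : (1:ℝ) + ‖x‖ ^ 2 = WPaux.Q x := by rw [WPaux.norm_sq_eq]; rfl
    rw [h1, Real.sqrt_eq_rpow, ← Real.rpow_mul (WPaux.Q_pos x).le]
    congr 1; ring
  have hRw : ∀ x : WPaux.E3, Real.sqrt (1 + ‖x‖ ^ 2) ^ (-(1 - σ)) = WPaux.Q x ^ ((σ - 1)/2) := by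
    intro x
    have h1 : (1:ℝ) + ‖x‖ ^ 2 = WPaux.Q x := by rw [WPaux.norm_sq_eq]; rfl
    rw [h1, Real.sqrt_eq_rpow, ← Real.rpow_mul (WPaux.Q_pos x).le]
    congr 1; ring
  simp only [hL, hRw]
  rw [← Real.sqrt_eq_rpow, ← Real.sqrt_eq_rpow]
  have h := WPaux.key σ hσ hσ1 hu hsu
  simpa only [WPaux.eb] using h
end

section
/- Let 0 < σ ≤ 1, 1 ≤ q ≤ ∞, w(x) = (1+|x|²)^{1/2}, and u(y) = v(x(y)) under y = x/w(x)^{1−σ} with v ∈ C¹. Then σ^{1/q} ‖w^{(1−3/q)(1−σ)} ∂v‖_q ≤ ‖∂u‖_q ≤ σ^{−1} ‖w^{(1−3/q)(1−σ)} ∂v‖_q, where |∂v|² = Σ_k |∂_k v|². -/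
open MeasureTheory
open scoped ENNReal RealInnerProductSpace

noncomputable section CoVAux

local notation "E3" => EuclideanSpace ℝ (Fin 3)

def covPhi (σ : ℝ) (x : E3) : ℝ := (1 + ‖x‖ ^ 2) ^ (-(1 - σ) / 2 : ℝ)

def covC (σ : ℝ) (x : E3) : ℝ := (1 - σ) / (1 + ‖x‖ ^ 2)

def covDer (σ : ℝ) (x : E3) : E3 →L[ℝ] E3 :=
  covPhi σ x • (ContinuousLinearMap.id ℝ E3 - covC σ x • ((innerSL ℝ x).smulRight x))

lemma one_add_normsq_pos (x : E3) : (0:ℝ) < 1 + ‖x‖ ^ 2 := by positivity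

lemma covPhi_pos (σ : ℝ) (x : E3) : 0 < covPhi σ x :=
  Real.rpow_pos_of_pos (one_add_normsq_pos x) _

lemma hasFDerivAt_covT (σ : ℝ) (x : E3) :
    HasFDerivAt (fun x : E3 => covPhi σ x • x) (covDer σ x) x := by
  have hpos := one_add_normsq_pos x
  have h1 : HasFDerivAt (fun x : E3 => ‖x‖ ^ 2) (2 • (innerSL ℝ x)) x :=
    (hasStrictFDerivAt_norm_sq x).hasFDerivAt
  have h2 : HasFDerivAt (fun x : E3 => 1 + ‖x‖ ^ 2) (2 • (innerSL ℝ x)) x :=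
    h1.const_add 1
  have h3 : HasFDerivAt (fun x : E3 => covPhi σ x)
      (((-(1 - σ) / 2) * (1 + ‖x‖ ^ 2) ^ ((-(1 - σ) / 2) - 1)) • (2 • (innerSL ℝ x))) x := by
    have := (Real.hasStrictDerivAt_rpow_const (p := (-(1 - σ) / 2 : ℝ))
        (Or.inl hpos.ne')).hasDerivAt.comp_hasFDerivAt x h2
    simpa [covPhi, Function.comp_def] using this
  have h4 := h3.smul (hasFDerivAt_id x)
  refine h4.congr_fderiv ?_
  ext ξ k
  have hne := hpos.ne'
  have hrw : (1 + ‖x‖ ^ 2 : ℝ) ^ ((-(1 - σ) / 2) - 1)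
      = covPhi σ x / (1 + ‖x‖ ^ 2) := by
    rw [covPhi, Real.rpow_sub hpos, Real.rpow_one]
  simp only [covDer, ContinuousLinearMap.smul_apply, ContinuousLinearMap.sub_apply,
    ContinuousLinearMap.id_apply, ContinuousLinearMap.add_apply,
    ContinuousLinearMap.smulRight_apply, innerSL_apply_apply, ContinuousLinearMap.smul_apply, hrw]
  simp only [PiLp.smul_apply, PiLp.sub_apply, PiLp.add_apply, smul_eq_mul, covC, id_eq]
  ring

lemma covDer_det (σ : ℝ) (x : E3) :
    (covDer σ x).det = covPhi σ x ^ 3 * (1 - covC σ x * ‖x‖ ^ 2) := by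
  classical
  set b := (EuclideanSpace.basisFun (Fin 3) ℝ).toBasis with hb
  have hdet : (covDer σ x).det
      = LinearMap.det ((covDer σ x : E3 →ₗ[ℝ] E3)) := rfl
  rw [hdet]
  have hcoe : ((covDer σ x : E3 →ₗ[ℝ] E3))
      = covPhi σ x • ((ContinuousLinearMap.id ℝ E3
          - covC σ x • ((innerSL ℝ x).smulRight x) : E3 →L[ℝ] E3) : E3 →ₗ[ℝ] E3) := by
    rfl
  rw [hcoe, LinearMap.det_smul, finrank_euclideanSpace_fin]
  congr 1
  set A : E3 →ₗ[ℝ] E3 := ((ContinuousLinearMap.id ℝ E3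
          - covC σ x • ((innerSL ℝ x).smulRight x) : E3 →L[ℝ] E3) : E3 →ₗ[ℝ] E3)
  rw [← LinearMap.det_toMatrix b A]
  have hm : LinearMap.toMatrix b b A
      = 1 + Matrix.replicateCol Unit (fun i => -(covC σ x) * x i) * Matrix.replicateRow Unit (fun j => x j) := by
    ext i j
    simp [A, LinearMap.toMatrix_apply, b, Matrix.one_apply, Matrix.mul_apply,
      EuclideanSpace.basisFun_apply, PiLp.inner_apply, EuclideanSpace.single_apply,
      RCLike.inner_apply, mul_comm, Matrix.replicateCol_apply, Matrix.replicateRow_apply]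
    rcases eq_or_ne i j with h | h <;> simp [h] <;> ring
  rw [hm, Matrix.det_one_add_replicateCol_mul_replicateRow]
  have hns : ‖x‖ ^ 2 = ∑ i, x i * x i := by
    rw [EuclideanSpace.norm_sq_eq]
    simp [sq]
  have h2 : (dotProduct (fun j => x j) (fun i => -(covC σ x) * x i))
      = -(covC σ x * ∑ i, x i * x i) := by
    rw [dotProduct, Finset.mul_sum, ← Finset.sum_neg_distrib]
    exact Finset.sum_congr rfl fun i _ => by ring
  rw [h2, hns]
  ring

lemma quad_bound (σ s Q p : ℝ) (hσ : 0 < σ) (hσ1 : σ ≤ 1) (hs : 0 ≤ s) (hQ : 0 ≤ Q)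
    (hp : p ^ 2 ≤ s * Q) :
    σ ^ 2 * Q ≤ Q - 2 * ((1-σ)/(1+s)) * p ^ 2 + ((1-σ)/(1+s)) ^ 2 * p ^ 2 * s ∧
      Q - 2 * ((1-σ)/(1+s)) * p ^ 2 + ((1-σ)/(1+s)) ^ 2 * p ^ 2 * s ≤ Q := by
  have h1s : (0:ℝ) < 1 + s := by linarith
  set c := (1-σ)/(1+s) with hc
  have hc0 : 0 ≤ c := div_nonneg (by linarith) h1s.le
  have hcs : c * s ≤ 1 - σ := by
    rw [hc, div_mul_eq_mul_div, div_le_iff₀ h1s]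
    nlinarith
  have h2 : 0 ≤ 2 - c * s := by linarith
  have hσcs : σ ≤ 1 - c * s := by
    rw [hc, div_mul_eq_mul_div, sub_div' h1s.ne', le_div_iff₀ h1s]
    nlinarith
  constructor
  · have key : c * (2 - c*s) * p ^ 2 ≤ c * (2 - c*s) * (s * Q) :=
      mul_le_mul_of_nonneg_left hp (mul_nonneg hc0 h2)
    nlinarith [mul_le_mul hσcs hσcs hσ.le (by linarith), mul_nonneg (mul_nonneg hc0 h2) hQ]
  · nlinarith [mul_nonneg (mul_nonneg hc0 h2) (sq_nonneg p)]

lemma covT_eq (σ : ℝ) (T : E3 → E3)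
    (hT : ∀ (x : E3) (k : Fin 3), T x k = x k / Real.sqrt (1 + ‖x‖ ^ 2) ^ (1 - σ)) :
    T = fun x : E3 => covPhi σ x • x := by
  funext x
  ext k
  have h0 := one_add_normsq_pos x
  rw [hT x k]
  simp only [PiLp.smul_apply, smul_eq_mul, covPhi]
  rw [Real.sqrt_eq_rpow, ← Real.rpow_mul h0.le, div_eq_mul_inv, ← Real.rpow_neg h0.le,
    mul_comm]
  congr 1
  ring

lemma sqrt_rpow_inv_covPhi (σ : ℝ) (x : E3) :
    Real.sqrt (1 + ‖x‖ ^ 2) ^ ((1 : ℝ) - σ) = (covPhi σ x)⁻¹ := by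
  have h0 := one_add_normsq_pos x
  rw [Real.sqrt_eq_rpow, ← Real.rpow_mul h0.le, covPhi, ← Real.rpow_neg h0.le]
  congr 1
  ring

lemma weight_q (σ q' : ℝ) (hq' : q' ≠ 0) (x : E3) :
    (Real.sqrt (1 + ‖x‖ ^ 2) ^ ((1 - 3 / q') * (1 - σ))) ^ q'
      = covPhi σ x ^ (3 : ℕ) * ((covPhi σ x)⁻¹) ^ q' := by
  have h0 := one_add_normsq_pos x
  rw [Real.sqrt_eq_rpow, ← Real.rpow_mul h0.le, ← Real.rpow_mul h0.le, covPhi,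
    ← Real.rpow_neg h0.le, ← Real.rpow_mul h0.le, ← Real.rpow_natCast ((1 + ‖x‖ ^ 2) ^ (-(1 - σ) / 2 : ℝ)) 3,
    ← Real.rpow_mul h0.le, ← Real.rpow_add h0]
  congr 1
  field_simp
  ring

lemma covDet_bounds (σ : ℝ) (hσ : 0 < σ) (hσ1 : σ ≤ 1) (x : E3) :
    σ * covPhi σ x ^ 3 ≤ |(covDer σ x).det| ∧ |(covDer σ x).det| ≤ covPhi σ x ^ 3 := by
  have hφ := covPhi_pos σ x
  have h0 := one_add_normsq_pos x
  have hs : (0:ℝ) ≤ ‖x‖ ^ 2 := sq_nonneg _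
  have hc : covC σ x * ‖x‖ ^ 2 = (1 - σ) * ‖x‖ ^ 2 / (1 + ‖x‖ ^ 2) := by
    rw [covC]; ring
  have h1 : σ ≤ 1 - covC σ x * ‖x‖ ^ 2 := by
    have : (1 - σ) * ‖x‖ ^ 2 / (1 + ‖x‖ ^ 2) ≤ 1 - σ := by
      rw [div_le_iff₀ h0]; nlinarith
    rw [hc]; linarith
  have h2 : 1 - covC σ x * ‖x‖ ^ 2 ≤ 1 := by
    rw [hc]
    have : (0:ℝ) ≤ (1 - σ) * ‖x‖ ^ 2 / (1 + ‖x‖ ^ 2) :=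
      div_nonneg (mul_nonneg (by linarith) hs) h0.le
    linarith
  have habs : |(covDer σ x).det| = covPhi σ x ^ 3 * (1 - covC σ x * ‖x‖ ^ 2) := by
    rw [covDer_det]
    exact abs_of_pos (mul_pos (pow_pos hφ 3) (by linarith))
  rw [habs]
  constructor
  · nlinarith [pow_pos hφ 3]
  · nlinarith [pow_pos hφ 3]

lemma le_essSup_of_cont {f : EuclideanSpace ℝ (Fin 3) → ℝ≥0∞} (hf : Continuous f)
    (y : EuclideanSpace ℝ (Fin 3)) : f y ≤ essSup f volume := by
  by_contra hlt
  push_neg at hlt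
  have hopen : IsOpen {z : EuclideanSpace ℝ (Fin 3) | essSup f volume < f z} :=
    isOpen_lt continuous_const hf
  have hpos : 0 < volume {z : EuclideanSpace ℝ (Fin 3) | essSup f volume < f z} :=
    hopen.measure_pos volume ⟨y, hlt⟩
  have h := ENNReal.ae_le_essSup (μ := (volume : Measure (EuclideanSpace ℝ (Fin 3)))) f
  rw [ae_iff] at h
  simp only [not_le] at h
  exact hpos.ne' h

lemma grad_bounds (σ : ℝ) (hσ : 0 < σ) (hσ1 : σ ≤ 1)
    (u v : E3 → ℝ) (hu : ContDiff ℝ 1 u)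
    (T : E3 → E3) (hTeq : T = fun x : E3 => covPhi σ x • x)
    (huv : ∀ x, u (T x) = v x) (x : E3) :
    σ * Real.sqrt (∑ k : Fin 3, (fderiv ℝ u (T x) (EuclideanSpace.single k 1)) ^ 2)
      ≤ (covPhi σ x)⁻¹ * Real.sqrt (∑ k : Fin 3, (fderiv ℝ v x (EuclideanSpace.single k 1)) ^ 2)
    ∧ (covPhi σ x)⁻¹ * Real.sqrt (∑ k : Fin 3, (fderiv ℝ v x (EuclideanSpace.single k 1)) ^ 2)
      ≤ Real.sqrt (∑ k : Fin 3, (fderiv ℝ u (T x) (EuclideanSpace.single k 1)) ^ 2) := by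
  classical
  have hφ := covPhi_pos σ x
  have hT' : HasFDerivAt T (covDer σ x) x := by
    rw [hTeq]; exact hasFDerivAt_covT σ x
  have hvu : v = fun x => u (T x) := by funext y; rw [huv y]
  have hux : HasFDerivAt u (fderiv ℝ u (T x)) (T x) :=
    ((hu.differentiable one_ne_zero) (T x)).hasFDerivAt
  have hvd : HasFDerivAt v ((fderiv ℝ u (T x)).comp (covDer σ x)) x := by
    rw [hvu]; exact hux.comp x hT'
  have hfv : fderiv ℝ v x = (fderiv ℝ u (T x)).comp (covDer σ x) := hvd.fderiv
  set g : Fin 3 → ℝ := fun k => fderiv ℝ u (T x) (EuclideanSpace.single k 1) with hg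
  set c := covC σ x with hcdef
  set p : ℝ := ∑ k, x k * g k with hp
  have hxsum : ∑ k, x k • (EuclideanSpace.single k (1:ℝ)) = x := by
    simpa [EuclideanSpace.basisFun_apply, EuclideanSpace.basisFun_repr] using
      (EuclideanSpace.basisFun (Fin 3) ℝ).sum_repr x
  have happx : fderiv ℝ u (T x) x = p := by
    have h7 : ∀ L : EuclideanSpace ℝ (Fin 3) →L[ℝ] ℝ,
        L x = ∑ k, x k * L (EuclideanSpace.single k 1) := by
      intro L
      conv_lhs => rw [← hxsum]
      rw [map_sum]
      exact Finset.sum_congr rfl fun k _ => by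
        rw [ContinuousLinearMap.map_smul, smul_eq_mul]
    exact h7 (fderiv ℝ u (T x))
  have hvl : ∀ l : Fin 3, fderiv ℝ v x (EuclideanSpace.single l 1)
      = covPhi σ x * (g l - c * x l * p) := by
    intro l
    rw [hfv]
    simp only [ContinuousLinearMap.comp_apply, covDer, ContinuousLinearMap.smul_apply,
      ContinuousLinearMap.sub_apply, ContinuousLinearMap.id_apply,
      ContinuousLinearMap.smulRight_apply, innerSL_apply_apply]
    have hinner : (inner ℝ x (EuclideanSpace.single l (1:ℝ)) : ℝ) = x l := by
      simp [PiLp.inner_apply, EuclideanSpace.single_apply]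
    rw [hinner]
    simp only [_root_.map_smul, map_sub, smul_eq_mul]
    rw [happx, show (fderiv ℝ u (T x)) (EuclideanSpace.single l 1) = g l from rfl]
    ring
  have hsumv : (∑ k : Fin 3, (fderiv ℝ v x (EuclideanSpace.single k 1)) ^ 2)
      = covPhi σ x ^ 2 * ∑ k, (g k - c * x k * p) ^ 2 := by
    rw [Finset.mul_sum]
    exact Finset.sum_congr rfl fun k _ => by rw [hvl k]; ring
  set Q : ℝ := ∑ k, g k ^ 2 with hQdef
  set s : ℝ := ∑ k, x k ^ 2 with hsdef
  have hQ0 : 0 ≤ Q := Finset.sum_nonneg fun _ _ => sq_nonneg _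
  have hs0 : 0 ≤ s := Finset.sum_nonneg fun _ _ => sq_nonneg _
  have hcs : p ^ 2 ≤ s * Q := Finset.sum_mul_sq_le_sq_mul_sq _ _ _
  have hns : ‖x‖ ^ 2 = s := by
    rw [EuclideanSpace.norm_sq_eq]
    simp [hsdef, sq]
  have hc : c = (1 - σ)/(1 + s) := by rw [hcdef, covC, hns]
  have hexp : (∑ k, (g k - c * x k * p) ^ 2)
      = Q - 2 * ((1-σ)/(1+s)) * p ^ 2 + ((1-σ)/(1+s)) ^ 2 * p ^ 2 * s := by
    rw [← hc]
    have h5 : (∑ k, (g k - c * x k * p) ^ 2)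
        = ∑ k, (g k ^ 2 - 2 * c * p * (x k * g k) + c ^ 2 * p ^ 2 * x k ^ 2) :=
      Finset.sum_congr rfl fun k _ => by ring
    rw [h5, Finset.sum_add_distrib, Finset.sum_sub_distrib, ← Finset.mul_sum, ← Finset.mul_sum,
      ← hp, ← hQdef, ← hsdef, hc]
    ring
  obtain ⟨hlo, hhi⟩ := quad_bound σ s Q p hσ hσ1 hs0 hQ0 hcs
  have hSQ : (∑ k : Fin 3, (fderiv ℝ v x (EuclideanSpace.single k 1)) ^ 2)
      = covPhi σ x ^ 2 * (Q - 2 * ((1-σ)/(1+s)) * p ^ 2 + ((1-σ)/(1+s)) ^ 2 * p ^ 2 * s) := by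
    rw [hsumv, hexp]
  have hsqrt : Real.sqrt (∑ k : Fin 3, (fderiv ℝ v x (EuclideanSpace.single k 1)) ^ 2)
      = covPhi σ x * Real.sqrt (Q - 2 * ((1-σ)/(1+s)) * p ^ 2 + ((1-σ)/(1+s)) ^ 2 * p ^ 2 * s) := by
    rw [hSQ, Real.sqrt_mul (sq_nonneg _), Real.sqrt_sq hφ.le]
  have hGu : Real.sqrt (∑ k : Fin 3, (fderiv ℝ u (T x) (EuclideanSpace.single k 1)) ^ 2)
      = Real.sqrt Q := rfl
  rw [hsqrt, hGu, ← mul_assoc, inv_mul_cancel₀ hφ.ne', one_mul]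
  constructor
  · have h6 : σ * Real.sqrt Q = Real.sqrt (σ ^ 2 * Q) := by
      rw [Real.sqrt_mul (sq_nonneg _), Real.sqrt_sq hσ.le]
    rw [h6]
    exact Real.sqrt_le_sqrt hlo
  · exact Real.sqrt_le_sqrt hhi

end CoVAux

/-- Inequality (5.8): transformation of gradient `L^q` norms under the change
of variables `y = x/w^{1-σ}` (with `u(y) = v(x(y))`, `v ∈ C¹`). -/
theorem change_of_variables_gradient_norms (σ : ℝ) (hσ : 0 < σ) (hσ1 : σ ≤ 1)
    (q : ℝ≥0∞) (hq : 1 ≤ q)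
    (u v : EuclideanSpace ℝ (Fin 3) → ℝ)
    (hv : ContDiff ℝ 1 v) (hu : ContDiff ℝ 1 u)
    (T : EuclideanSpace ℝ (Fin 3) → EuclideanSpace ℝ (Fin 3))
    (hT : ∀ (x : EuclideanSpace ℝ (Fin 3)) (k : Fin 3),
      T x k = x k / Real.sqrt (1 + ‖x‖ ^ 2) ^ (1 - σ))
    (hbij : Function.Bijective T)
    (huv : ∀ x, u (T x) = v x) :
    ENNReal.ofReal (σ ^ ((1 : ℝ) / q.toReal)) *
        eLpNorm (fun x : EuclideanSpace ℝ (Fin 3) =>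
          Real.sqrt (1 + ‖x‖ ^ 2) ^ ((1 - 3 / q.toReal) * (1 - σ)) *
            Real.sqrt (∑ k : Fin 3,
              (fderiv ℝ v x (EuclideanSpace.single k 1)) ^ 2)) q volume
      ≤ eLpNorm (fun y : EuclideanSpace ℝ (Fin 3) =>
          Real.sqrt (∑ k : Fin 3,
            (fderiv ℝ u y (EuclideanSpace.single k 1)) ^ 2)) q volume ∧
    eLpNorm (fun y : EuclideanSpace ℝ (Fin 3) =>
        Real.sqrt (∑ k : Fin 3,
          (fderiv ℝ u y (EuclideanSpace.single k 1)) ^ 2)) q volume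
      ≤ ENNReal.ofReal σ⁻¹ *
        eLpNorm (fun x : EuclideanSpace ℝ (Fin 3) =>
          Real.sqrt (1 + ‖x‖ ^ 2) ^ ((1 - 3 / q.toReal) * (1 - σ)) *
            Real.sqrt (∑ k : Fin 3,
              (fderiv ℝ v x (EuclideanSpace.single k 1)) ^ 2)) q volume := by
  classical
  have hTeq : T = fun x : EuclideanSpace ℝ (Fin 3) => covPhi σ x • x := covT_eq σ T hT
  have hq0 : q ≠ 0 := fun h => by simp [h] at hq
  set Af : EuclideanSpace ℝ (Fin 3) → ℝ := fun y => Real.sqrt (∑ k : Fin 3,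
      (fderiv ℝ u y (EuclideanSpace.single k 1)) ^ 2) with hAfdef
  set Vf : EuclideanSpace ℝ (Fin 3) → ℝ := fun x => Real.sqrt (∑ k : Fin 3,
      (fderiv ℝ v x (EuclideanSpace.single k 1)) ^ 2) with hVfdef
  have hA0 : ∀ y, 0 ≤ Af y := fun y => Real.sqrt_nonneg _
  have hV0 : ∀ x, 0 ≤ Vf x := fun x => Real.sqrt_nonneg _
  have hGB : ∀ x, σ * Af (T x) ≤ (covPhi σ x)⁻¹ * Vf x ∧
      (covPhi σ x)⁻¹ * Vf x ≤ Af (T x) :=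
    fun x => grad_bounds σ hσ hσ1 u v hu T hTeq huv x
  have hφpos : ∀ x : EuclideanSpace ℝ (Fin 3), 0 < covPhi σ x := covPhi_pos σ
  rcases eq_or_ne q ∞ with hq1 | hq1
  · -- q = ∞
    subst hq1
    simp only [ENNReal.toReal_top, div_zero, sub_zero, one_mul, Real.rpow_zero,
      ENNReal.ofReal_one]
    simp only [sqrt_rpow_inv_covPhi σ]
    -- continuity
    have hdu : Continuous (fderiv ℝ u) := hu.continuous_fderiv one_ne_zero
    have hdv : Continuous (fderiv ℝ v) := hv.continuous_fderiv one_ne_zero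
    have hcontA : Continuous Af := by
      apply Real.continuous_sqrt.comp
      exact continuous_finset_sum _ fun k _ => (hdu.clm_apply continuous_const).pow 2
    have hcontV : Continuous Vf := by
      apply Real.continuous_sqrt.comp
      exact continuous_finset_sum _ fun k _ => (hdv.clm_apply continuous_const).pow 2
    have hcontφi : Continuous fun x : EuclideanSpace ℝ (Fin 3) => (covPhi σ x)⁻¹ := by
      apply Continuous.inv₀
      · exact (continuous_const.add ((continuous_norm).pow 2)).rpow_const
          fun x => Or.inl (one_add_normsq_pos x).ne'
      · exact fun x => (hφpos x).ne'
    have hcontB : Continuous fun x : EuclideanSpace ℝ (Fin 3) => (covPhi σ x)⁻¹ * Vf x :=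
      hcontφi.mul hcontV
    have hfA : Continuous fun y : EuclideanSpace ℝ (Fin 3) => (‖Af y‖₊ : ℝ≥0∞) :=
      ENNReal.continuous_coe.comp hcontA.nnnorm
    have hfB : Continuous fun x : EuclideanSpace ℝ (Fin 3) =>
        (‖(covPhi σ x)⁻¹ * Vf x‖₊ : ℝ≥0∞) :=
      ENNReal.continuous_coe.comp hcontB.nnnorm
    have hB0 : ∀ x, 0 ≤ (covPhi σ x)⁻¹ * Vf x :=
      fun x => mul_nonneg (inv_nonneg.2 (hφpos x).le) (hV0 x)
    rw [eLpNorm_exponent_top, eLpNorm_exponent_top]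
    constructor
    · refine essSup_le_of_ae_le _ (Filter.Eventually.of_forall fun x => ?_)
      calc (‖(covPhi σ x)⁻¹ * Vf x‖₊ : ℝ≥0∞)
          ≤ (‖Af (T x)‖₊ : ℝ≥0∞) := by
            rw [← enorm_eq_nnnorm, ← enorm_eq_nnnorm, Real.enorm_eq_ofReal (hB0 x), Real.enorm_eq_ofReal (hA0 _)]
            exact ENNReal.ofReal_le_ofReal (hGB x).2
        _ ≤ essSup (fun y => (‖Af y‖₊ : ℝ≥0∞)) volume := le_essSup_of_cont hfA (T x)
    · refine essSup_le_of_ae_le _ (Filter.Eventually.of_forall fun y => ?_)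
      set x := Function.surjInv hbij.surjective y with hx
      have hTx : T x = y := Function.surjInv_eq hbij.surjective y
      calc (‖Af y‖₊ : ℝ≥0∞) = ENNReal.ofReal (Af (T x)) := by
            rw [hTx, ← enorm_eq_nnnorm, Real.enorm_eq_ofReal (hA0 y)]
        _ ≤ ENNReal.ofReal (σ⁻¹ * ((covPhi σ x)⁻¹ * Vf x)) :=
            ENNReal.ofReal_le_ofReal ((le_inv_mul_iff₀ hσ).2 (hGB x).1)
        _ = ENNReal.ofReal σ⁻¹ * (‖(covPhi σ x)⁻¹ * Vf x‖₊ : ℝ≥0∞) := by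
            rw [ENNReal.ofReal_mul (inv_nonneg.2 hσ.le), ← enorm_eq_nnnorm, Real.enorm_eq_ofReal (hB0 x)]
        _ ≤ ENNReal.ofReal σ⁻¹ *
            essSup (fun z => (‖(covPhi σ z)⁻¹ * Vf z‖₊ : ℝ≥0∞)) volume :=
            mul_le_mul_right (le_essSup_of_cont hfB x) _
  · -- q finite
    have hq' : 0 < q.toReal := ENNReal.toReal_pos hq0 hq1
    set q' := q.toReal with hq'def
    set Bf : EuclideanSpace ℝ (Fin 3) → ℝ := fun x =>
      Real.sqrt (1 + ‖x‖ ^ 2) ^ ((1 - 3 / q') * (1 - σ)) * Vf x with hBfdef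
    have hB0 : ∀ x, 0 ≤ Bf x :=
      fun x => mul_nonneg (Real.rpow_nonneg (Real.sqrt_nonneg _) _) (hV0 x)
    have key : ∀ x : EuclideanSpace ℝ (Fin 3),
        σ * Bf x ^ q' ≤ |(covDer σ x).det| * Af (T x) ^ q' ∧
        |(covDer σ x).det| * Af (T x) ^ q' ≤ σ ^ (-q') * Bf x ^ q' := by
      intro x
      obtain ⟨h1, h2⟩ := hGB x
      obtain ⟨hd1, hd2⟩ := covDet_bounds σ hσ hσ1 x
      have hφ := hφpos x
      have hBq : Bf x ^ q' = covPhi σ x ^ 3 * ((covPhi σ x)⁻¹ * Vf x) ^ q' := by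
        rw [hBfdef]
        simp only
        rw [Real.mul_rpow (Real.rpow_nonneg (Real.sqrt_nonneg _) _) (hV0 x),
          weight_q σ q' hq'.ne' x,
          Real.mul_rpow (inv_nonneg.2 hφ.le) (hV0 x)]
        ring
      have hX0 : (0:ℝ) ≤ (covPhi σ x)⁻¹ * Vf x := mul_nonneg (inv_nonneg.2 hφ.le) (hV0 x)
      constructor
      · rw [hBq]
        have hr : ((covPhi σ x)⁻¹ * Vf x) ^ q' ≤ Af (T x) ^ q' :=
          Real.rpow_le_rpow hX0 h2 hq'.le
        calc σ * (covPhi σ x ^ 3 * ((covPhi σ x)⁻¹ * Vf x) ^ q')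
            = (σ * covPhi σ x ^ 3) * ((covPhi σ x)⁻¹ * Vf x) ^ q' := by ring
          _ ≤ |(covDer σ x).det| * Af (T x) ^ q' :=
            mul_le_mul hd1 hr (Real.rpow_nonneg hX0 _) (abs_nonneg _)
      · rw [hBq]
        have hATx : Af (T x) ≤ σ⁻¹ * ((covPhi σ x)⁻¹ * Vf x) := (le_inv_mul_iff₀ hσ).2 h1
        have hr : Af (T x) ^ q' ≤ (σ⁻¹ * ((covPhi σ x)⁻¹ * Vf x)) ^ q' :=
          Real.rpow_le_rpow (hA0 _) hATx hq'.le
        have hexp : (σ⁻¹ * ((covPhi σ x)⁻¹ * Vf x)) ^ q'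
            = σ ^ (-q') * ((covPhi σ x)⁻¹ * Vf x) ^ q' := by
          rw [Real.mul_rpow (inv_nonneg.2 hσ.le) hX0, Real.inv_rpow hσ.le,
            ← Real.rpow_neg hσ.le]
        calc |(covDer σ x).det| * Af (T x) ^ q'
            ≤ covPhi σ x ^ 3 * (σ ^ (-q') * ((covPhi σ x)⁻¹ * Vf x) ^ q') := by
              rw [← hexp]
              exact mul_le_mul hd2 hr (Real.rpow_nonneg (hA0 _) _) (pow_nonneg hφ.le 3)
          _ = σ ^ (-q') * (covPhi σ x ^ 3 * ((covPhi σ x)⁻¹ * Vf x) ^ q') := by ring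
    have hCoV : (∫⁻ y, (‖Af y‖₊ : ℝ≥0∞) ^ q' ∂volume)
        = ∫⁻ x, ENNReal.ofReal |(covDer σ x).det| * (‖Af (T x)‖₊ : ℝ≥0∞) ^ q' ∂volume := by
      have h := lintegral_image_eq_lintegral_abs_det_fderiv_mul
        (volume : Measure (EuclideanSpace ℝ (Fin 3))) MeasurableSet.univ
        (f := T) (f' := fun x => covDer σ x)
        (fun x _ => by rw [hTeq]; exact (hasFDerivAt_covT σ x).hasFDerivWithinAt)
        (hbij.injective.injOn) (fun y => (‖Af y‖₊ : ℝ≥0∞) ^ q')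
      simpa [Set.image_univ, hbij.surjective.range_eq] using h
    have hofA : ∀ y, (‖Af y‖₊ : ℝ≥0∞) = ENNReal.ofReal (Af y) :=
      fun y => Real.enorm_eq_ofReal (hA0 y)
    have hofB : ∀ x, (‖Bf x‖₊ : ℝ≥0∞) = ENNReal.ofReal (Bf x) :=
      fun x => Real.enorm_eq_ofReal (hB0 x)
    have hlow : ENNReal.ofReal σ * ∫⁻ x, (‖Bf x‖₊ : ℝ≥0∞) ^ q' ∂volume
        ≤ ∫⁻ y, (‖Af y‖₊ : ℝ≥0∞) ^ q' ∂volume := by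
      rw [hCoV, ← lintegral_const_mul' _ _ ENNReal.ofReal_ne_top]
      refine lintegral_mono fun x => ?_
      rw [hofA, hofB, ENNReal.ofReal_rpow_of_nonneg (hA0 _) hq'.le,
        ENNReal.ofReal_rpow_of_nonneg (hB0 _) hq'.le, ← ENNReal.ofReal_mul hσ.le,
        ← ENNReal.ofReal_mul (abs_nonneg _)]
      exact ENNReal.ofReal_le_ofReal (key x).1
    have hupp : (∫⁻ y, (‖Af y‖₊ : ℝ≥0∞) ^ q' ∂volume)
        ≤ ENNReal.ofReal (σ ^ (-q')) * ∫⁻ x, (‖Bf x‖₊ : ℝ≥0∞) ^ q' ∂volume := by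
      rw [hCoV, ← lintegral_const_mul' _ _ ENNReal.ofReal_ne_top]
      refine lintegral_mono fun x => ?_
      rw [hofA, hofB, ENNReal.ofReal_rpow_of_nonneg (hA0 _) hq'.le,
        ENNReal.ofReal_rpow_of_nonneg (hB0 _) hq'.le, ← ENNReal.ofReal_mul (abs_nonneg _),
        ← ENNReal.ofReal_mul (Real.rpow_nonneg hσ.le _)]
      exact ENNReal.ofReal_le_ofReal (key x).2
    have hEA : eLpNorm Af q volume = (∫⁻ y, (‖Af y‖₊ : ℝ≥0∞) ^ q' ∂volume) ^ (1/q') :=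
      eLpNorm_eq_lintegral_rpow_enorm_toReal hq0 hq1
    have hEB : eLpNorm Bf q volume = (∫⁻ x, (‖Bf x‖₊ : ℝ≥0∞) ^ q' ∂volume) ^ (1/q') :=
      eLpNorm_eq_lintegral_rpow_enorm_toReal hq0 hq1
    constructor
    · rw [hEA, hEB, ← ENNReal.ofReal_rpow_of_pos hσ,
        ← ENNReal.mul_rpow_of_nonneg _ _ (by positivity : (0:ℝ) ≤ 1/q')]
      exact ENNReal.rpow_le_rpow hlow (by positivity)
    · rw [hEA, hEB]
      have hcoef : ENNReal.ofReal (σ ^ (-q')) ^ (1/q') = ENNReal.ofReal σ⁻¹ := by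
        rw [ENNReal.ofReal_rpow_of_pos (Real.rpow_pos_of_pos hσ _)]
        congr 1
        rw [← Real.rpow_mul hσ.le]
        have : -q' * (1/q') = -1 := by field_simp
        rw [this, Real.rpow_neg_one]
      calc (∫⁻ y, (‖Af y‖₊ : ℝ≥0∞) ^ q' ∂volume) ^ (1/q')
          ≤ (ENNReal.ofReal (σ ^ (-q')) * ∫⁻ x, (‖Bf x‖₊ : ℝ≥0∞) ^ q' ∂volume) ^ (1/q') :=
            ENNReal.rpow_le_rpow hupp (by positivity)
        _ = ENNReal.ofReal (σ ^ (-q')) ^ (1/q')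
              * (∫⁻ x, (‖Bf x‖₊ : ℝ≥0∞) ^ q' ∂volume) ^ (1/q') :=
            ENNReal.mul_rpow_of_nonneg _ _ (by positivity)
        _ ≤ ENNReal.ofReal σ⁻¹ * (∫⁻ x, (‖Bf x‖₊ : ℝ≥0∞) ^ q' ∂volume) ^ (1/q') := by
            rw [hcoef]
end
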